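/- Any copula-based multivariate dependency measure that vanishes only at the uniform copula is irreducible: if I(X) = M(C_X) is a functional of the copula C_X of X such that M(C_X) = 0 implies C_X = Π, then for every d ≥ 3, I(X₁,…,X_d) is not determined by the collection of values {I(X_{i₁},…,X_{i_k}) : {i₁,…,i_k} ⊊ {1,…,d}} over all proper sub-collections of coordinates. -/

import Mathlib

open MeasureTheory

/-- The uniform (independence) copula `Π` on `[0,1]^d`. -/
noncomputable def unifCopula (d : ℕ) : Measure (Fin d → ℝ) :=
  Measure.pi fun _ : Fin d => volume.restrict (Set.Icc (0:ℝ) 1)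

/-- A `d`-dimensional copula: a probability measure all of whose one-dimensional
marginals are uniform on `[0,1]`. -/
def IsCopula (d : ℕ) (C : Measure (Fin d → ℝ)) : Prop :=
  IsProbabilityMeasure C ∧
    ∀ i : Fin d, C.map (fun u => u i) = volume.restrict (Set.Icc (0:ℝ) 1)

section Aux

noncomputable def nuI : Measure ℝ := volume.restrict (Set.Icc (0:ℝ) 1)

instance : IsProbabilityMeasure nuI := ⟨by simp [nuI, Real.volume_Icc]⟩

noncomputable def gsgn (t : ℝ) : ℝ := if t < 1/2 then -1 else 1

lemma gsgn_meas : Measurable gsgn :=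
  Measurable.ite measurableSet_Iio measurable_const measurable_const

lemma gsgn_abs (t : ℝ) : |gsgn t| = 1 := by
  unfold gsgn; split <;> simp

lemma gsgn_intOn {s : Set ℝ} (hs : volume s ≠ ⊤) : IntegrableOn gsgn s := by
  haveI : IsFiniteMeasure (volume.restrict s) :=
    ⟨by rwa [Measure.restrict_apply_univ, lt_top_iff_ne_top]⟩
  exact Integrable.mono' (integrable_const 1) gsgn_meas.aestronglyMeasurable
    (Filter.Eventually.of_forall fun t => by rw [Real.norm_eq_abs, gsgn_abs])

lemma integral_gsgn : ∫ t, gsgn t ∂nuI = 0 := by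
  have hu : Set.Ico (0:ℝ) (1/2) ∪ Set.Icc (1/2) 1 = Set.Icc (0:ℝ) 1 :=
    Set.Ico_union_Icc_eq_Icc (by norm_num) (by norm_num)
  have hdisj : Disjoint (Set.Ico (0:ℝ) (1/2)) (Set.Icc (1/2) 1) := by
    apply Set.disjoint_left.mpr
    rintro x ⟨_, hx⟩ ⟨hx', _⟩
    linarith
  have h1 : ∫ t in Set.Ico (0:ℝ) (1/2), gsgn t = -(1/2 : ℝ) := by
    rw [setIntegral_congr_fun (g := fun _ => (-1:ℝ)) measurableSet_Ico (fun x hx => by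
      simp only [gsgn, if_pos hx.2])]
    simp [Real.volume_Ico]
  have h2 : ∫ t in Set.Icc (1/2 : ℝ) 1, gsgn t = (1/2 : ℝ) := by
    rw [setIntegral_congr_fun (g := fun _ => (1:ℝ)) measurableSet_Icc (fun x hx => by
      simp only [gsgn, if_neg (not_lt.mpr hx.1)])]
    simp [Real.volume_Icc]
    norm_num
  have key : ∫ t in Set.Ico (0:ℝ) (1/2) ∪ Set.Icc (1/2) 1, gsgn t = 0 := by
    rw [setIntegral_union hdisj measurableSet_Icc
      (gsgn_intOn (by simp [Real.volume_Ico]))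
      (gsgn_intOn (by simp [Real.volume_Icc])), h1, h2]
    ring
  rw [nuI, ← hu]
  exact key

instance (d : ℕ) : IsProbabilityMeasure (unifCopula d) :=
  inferInstanceAs (IsProbabilityMeasure (Measure.pi fun _ : Fin d => nuI))

lemma fubini_nu (d : ℕ) (f : Fin d → ℝ → ℝ) :
    ∫ u, ∏ i, f i (u i) ∂(unifCopula d) = ∏ i, ∫ t, f i t ∂nuI := by
  letI : MeasureSpace ℝ := @MeasureSpace.mk ℝ Real.measurableSpace nuI
  haveI : SigmaFinite (volume : Measure ℝ) := (inferInstance : SigmaFinite nuI)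
  exact MeasureTheory.integral_fintype_prod_eq_prod (fun _ => f _)

noncomputable def densF (d : ℕ) (u : Fin d → ℝ) : ℝ := 1 + ∏ i, gsgn (u i)

lemma densF_meas (d : ℕ) : Measurable (densF d) :=
  measurable_const.add (Finset.measurable_prod _ fun i _ =>
    gsgn_meas.comp (measurable_pi_apply i))

lemma abs_prod_gsgn (d : ℕ) (u : Fin d → ℝ) : |∏ i, gsgn (u i)| = 1 := by
  rw [Finset.abs_prod]
  simp [gsgn_abs]

lemma densF_nonneg (d : ℕ) (u : Fin d → ℝ) : 0 ≤ densF d u := by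
  have := abs_le.mp (le_of_eq (abs_prod_gsgn d u))
  unfold densF; linarith

lemma densF_le (d : ℕ) (u : Fin d → ℝ) : ‖densF d u‖ ≤ 2 := by
  have := abs_le.mp (le_of_eq (abs_prod_gsgn d u))
  rw [Real.norm_eq_abs, abs_le]
  unfold densF
  constructor <;> linarith

noncomputable def C2 (d : ℕ) : Measure (Fin d → ℝ) :=
  (unifCopula d).withDensity fun u => ENNReal.ofReal (densF d u)

lemma good_unif (d : ℕ) (B : Fin d → Set ℝ) (_hB : ∀ i, MeasurableSet (B i)) :
    unifCopula d (Set.pi Set.univ B) = ∏ i, nuI (B i) :=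
  Measure.pi_pi _ _

lemma good_C2 (d : ℕ) (B : Fin d → Set ℝ) (hB : ∀ i, MeasurableSet (B i))
    (j : Fin d) (hj : B j = Set.univ) :
    C2 d (Set.pi Set.univ B) = ∏ i, nuI (B i) := by
  have hA : MeasurableSet (Set.pi Set.univ B) := MeasurableSet.univ_pi hB
  haveI : IsFiniteMeasure ((unifCopula d).restrict (Set.pi Set.univ B)) :=
    ⟨by rw [Measure.restrict_apply_univ]; exact (measure_lt_top _ _)⟩
  have hpm : Measurable fun u : Fin d → ℝ => ∏ i, gsgn (u i) :=
    Finset.measurable_prod _ fun i _ => gsgn_meas.comp (measurable_pi_apply i)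
  have hintp : Integrable (fun u : Fin d → ℝ => ∏ i, gsgn (u i))
      ((unifCopula d).restrict (Set.pi Set.univ B)) :=
    Integrable.mono' (integrable_const 1) hpm.aestronglyMeasurable
      (Filter.Eventually.of_forall fun u => by
        rw [Real.norm_eq_abs, abs_prod_gsgn])
  rw [C2, withDensity_apply _ hA]
  have hint : Integrable (densF d) ((unifCopula d).restrict (Set.pi Set.univ B)) :=
    Integrable.mono' (integrable_const 2) (densF_meas d).aestronglyMeasurable
      (Filter.Eventually.of_forall fun u => densF_le d u)
  rw [← ofReal_integral_eq_lintegral_ofReal hint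
    (Filter.Eventually.of_forall fun u => densF_nonneg d u)]
  have hzero : ∫ u in Set.pi Set.univ B, ∏ i, gsgn (u i) ∂(unifCopula d) = 0 := by
    rw [← integral_indicator hA]
    have hind : Set.indicator (Set.pi Set.univ B) (fun u => ∏ i, gsgn (u i))
        = fun u => ∏ i, Set.indicator (B i) gsgn (u i) := by
      funext u
      by_cases hu : u ∈ Set.pi Set.univ B
      · rw [Set.indicator_of_mem hu]
        exact Finset.prod_congr rfl fun i _ =>
          (Set.indicator_of_mem (hu i (Set.mem_univ i)) gsgn).symm
      · rw [Set.indicator_of_notMem hu]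
        simp only [Set.mem_pi, Set.mem_univ, forall_true_left, not_forall] at hu
        obtain ⟨i, hi⟩ := hu
        exact (Finset.prod_eq_zero (Finset.mem_univ i)
          (Set.indicator_of_notMem hi gsgn)).symm
    rw [hind, fubini_nu]
    exact Finset.prod_eq_zero (Finset.mem_univ j)
      (by rw [hj, Set.indicator_univ, integral_gsgn])
  have hsplit : ∫ u in Set.pi Set.univ B, densF d u ∂(unifCopula d)
      = ((unifCopula d) (Set.pi Set.univ B)).toReal := by
    unfold densF
    rw [integral_add (integrable_const 1) hintp, hzero, setIntegral_const]
    simp [measureReal_def]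
  rw [hsplit, ENNReal.ofReal_toReal (measure_ne_top _ _)]
  exact good_unif d B hB

lemma marg_pi (d : ℕ) (C : Measure (Fin d → ℝ))
    (h : ∀ B : Fin d → Set ℝ, (∀ i, MeasurableSet (B i)) → (∃ j, B j = Set.univ) →
      C (Set.pi Set.univ B) = ∏ i, nuI (B i))
    (s : Finset (Fin d)) (hs : s ≠ Finset.univ) :
    C.map (fun u (i : s) => u i) = Measure.pi (fun _ : s => nuI) := by
  obtain ⟨j, hj⟩ : ∃ j, j ∉ s := by
    by_contra h'
    push_neg at h'
    exact hs (Finset.eq_univ_iff_forall.mpr h')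
  have hproj : Measurable (fun u : Fin d → ℝ => fun i : s => u i) :=
    measurable_pi_lambda _ fun i => measurable_pi_apply _
  refine Eq.symm (Measure.pi_eq fun B' hB' => ?_)
  rw [Measure.map_apply hproj (MeasurableSet.univ_pi hB')]
  set extB : Fin d → Set ℝ := fun i => if h : i ∈ s then B' ⟨i, h⟩ else Set.univ with hextB
  have hpre : (fun u : Fin d → ℝ => fun i : s => u i) ⁻¹' (Set.pi Set.univ B')
      = Set.pi Set.univ extB := by
    ext u
    simp only [Set.mem_preimage, Set.mem_pi, Set.mem_univ, forall_true_left]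
    constructor
    · intro hu i
      by_cases hi : i ∈ s
      · simpa [extB, dif_pos hi] using hu ⟨i, hi⟩
      · simp [extB, dif_neg hi]
    · intro hu i
      simpa [extB, dif_pos i.2] using hu i
  rw [hpre, h extB (fun i => by
      by_cases hi : i ∈ s
      · simp only [extB, dif_pos hi]; exact hB' _
      · simp only [extB, dif_neg hi]; exact MeasurableSet.univ)
    ⟨j, by simp [extB, dif_neg hj]⟩]
  rw [← Finset.prod_subset (Finset.subset_univ s)
    (fun i _ hi => by simp [extB, dif_neg hi]),
    ← Finset.prod_attach s (fun i => nuI (extB i))]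
  rw [show (Finset.univ : Finset s) = s.attach from rfl]
  exact Finset.prod_congr rfl fun i _ => by simp [extB, dif_pos i.2]

lemma marg_one (d : ℕ) (hd : 3 ≤ d) (C : Measure (Fin d → ℝ)) [IsProbabilityMeasure C]
    (h : ∀ B : Fin d → Set ℝ, (∀ i, MeasurableSet (B i)) → (∃ j, B j = Set.univ) →
      C (Set.pi Set.univ B) = ∏ i, nuI (B i))
    (i : Fin d) :
    C.map (fun u => u i) = volume.restrict (Set.Icc (0:ℝ) 1) := by
  haveI : Nontrivial (Fin d) := ⟨⟨0, by omega⟩, ⟨1, by omega⟩, by simp [Fin.ext_iff]⟩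
  obtain ⟨j, hj⟩ := exists_ne i
  have hev : Measurable fun u : Fin d → ℝ => u i := measurable_pi_apply i
  haveI : IsProbabilityMeasure (C.map fun u => u i) :=
    Measure.isProbabilityMeasure_map hev.aemeasurable
  refine MeasureTheory.Measure.ext_of_Iic _ _ fun a => ?_
  rw [Measure.map_apply hev measurableSet_Iic]
  set B : Fin d → Set ℝ := fun k => if k = i then Set.Iic a else Set.univ with hBdef
  have hpre : (fun u : Fin d → ℝ => u i) ⁻¹' Set.Iic a = Set.pi Set.univ B := by
    ext u
    simp only [Set.mem_preimage, Set.mem_pi, Set.mem_univ, forall_true_left]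
    constructor
    · intro hu k
      by_cases hk : k = i
      · subst hk; simpa [B] using hu
      · simp [B, hk]
    · intro hu
      simpa [B] using hu i
  rw [hpre, h B (fun k => by
      by_cases hk : k = i <;> simp [B, hk, measurableSet_Iic])
    ⟨j, by simp [B, hj]⟩]
  rw [Finset.prod_eq_single i (fun k _ hk => by simp [B, hk])
    (fun hk => absurd (Finset.mem_univ i) hk)]
  simp [B, nuI]

lemma C2_prob (d : ℕ) (hd : 0 < d) : IsProbabilityMeasure (C2 d) := by
  constructor
  have := good_C2 d (fun _ => Set.univ) (fun _ => MeasurableSet.univ) ⟨0, hd⟩ rfl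
  simpa [Set.pi_univ] using this

lemma nuI_Ico : nuI (Set.Ico (0:ℝ) (1/2)) = ENNReal.ofReal (1/2) := by
  have hsub : Set.Ico (0:ℝ) (1/2) ⊆ Set.Icc 0 1 := fun x hx => ⟨hx.1, by
    have := hx.2; linarith⟩
  rw [nuI, Measure.restrict_apply measurableSet_Ico, Set.inter_eq_left.mpr hsub,
    Real.volume_Ico]
  norm_num

lemma nuI_Icc_half : nuI (Set.Icc (1/2:ℝ) 1) = ENNReal.ofReal (1/2) := by
  have hsub : Set.Icc (1/2:ℝ) 1 ⊆ Set.Icc 0 1 := fun x hx => ⟨by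
    have := hx.1; linarith, hx.2⟩
  rw [nuI, Measure.restrict_apply measurableSet_Icc, Set.inter_eq_left.mpr hsub,
    Real.volume_Icc]
  norm_num

lemma C2_ne (d : ℕ) (hd : 3 ≤ d) : C2 d ≠ unifCopula d := by
  set i0 : Fin d := ⟨0, by omega⟩ with hi0
  set B : Fin d → Set ℝ := fun k => if k = i0 then Set.Ico (0:ℝ) (1/2)
    else Set.Icc (1/2) 1 with hBdef
  have hBm : ∀ k, MeasurableSet (B k) := fun k => by
    by_cases hk : k = i0 <;> simp [B, hk, measurableSet_Ico, measurableSet_Icc]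
  have hA : MeasurableSet (Set.pi Set.univ B) := MeasurableSet.univ_pi hBm
  intro hEq
  have h1 : C2 d (Set.pi Set.univ B) = 0 := by
    rw [C2, withDensity_apply _ hA]
    have hz : ∀ u ∈ Set.pi Set.univ B, ENNReal.ofReal (densF d u) = 0 := by
      intro u hu
      have hprod : ∏ i, gsgn (u i) = -1 := by
        rw [Finset.prod_eq_single i0 (fun k _ hk => by
            have : u k ∈ Set.Icc (1/2:ℝ) 1 := by simpa [B, hk] using hu k (Set.mem_univ _)
            simp only [gsgn, if_neg (not_lt.mpr this.1)])
          (fun hk => absurd (Finset.mem_univ i0) hk)]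
        have h0 : u i0 ∈ Set.Ico (0:ℝ) (1/2) := by simpa [B] using hu i0 (Set.mem_univ _)
        simp only [gsgn, if_pos h0.2]
      simp [densF, hprod]
    rw [setLIntegral_congr_fun hA hz]
    simp
  have h2 : unifCopula d (Set.pi Set.univ B) ≠ 0 := by
    rw [good_unif d B hBm, Finset.prod_ne_zero_iff]
    intro k _
    by_cases hk : k = i0
    · rw [hBdef]
      simp only [if_pos hk]
      rw [nuI_Ico]
      norm_num [ENNReal.ofReal_eq_zero]
    · rw [hBdef]
      simp only [if_neg hk]
      rw [nuI_Icc_half]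
      norm_num [ENNReal.ofReal_eq_zero]
  rw [hEq] at h1
  exact h2 h1

end Aux

theorem stmt_8 (d : ℕ) (hd : 3 ≤ d) (M : Measure (Fin d → ℝ) → ℝ)
    (hM : ∀ C : Measure (Fin d → ℝ), IsCopula d C → (M C = 0 ↔ C = unifCopula d)) :
    ∃ C₁ C₂ : Measure (Fin d → ℝ), IsCopula d C₁ ∧ IsCopula d C₂ ∧
      M C₁ ≠ M C₂ ∧
      ∀ s : Finset (Fin d), s ≠ Finset.univ →
        C₁.map (fun u (i : s) => u i) = C₂.map (fun u (i : s) => u i) := by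
  haveI : IsProbabilityMeasure (C2 d) := C2_prob d (by omega)
  have keyC2 : ∀ B : Fin d → Set ℝ, (∀ i, MeasurableSet (B i)) →
      (∃ j, B j = Set.univ) → C2 d (Set.pi Set.univ B) = ∏ i, nuI (B i) := by
    rintro B hB ⟨j, hj⟩
    exact good_C2 d B hB j hj
  have keyU : ∀ B : Fin d → Set ℝ, (∀ i, MeasurableSet (B i)) →
      (∃ j, B j = Set.univ) → unifCopula d (Set.pi Set.univ B) = ∏ i, nuI (B i) :=
    fun B hB _ => good_unif d B hB
  have cop1 : IsCopula d (unifCopula d) :=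
    ⟨inferInstance, fun i => marg_one d hd _ keyU i⟩
  have cop2 : IsCopula d (C2 d) :=
    ⟨inferInstance, fun i => marg_one d hd _ keyC2 i⟩
  refine ⟨unifCopula d, C2 d, cop1, cop2, ?_, ?_⟩
  · have h1 : M (unifCopula d) = 0 := (hM _ cop1).mpr rfl
    intro hMe
    have h2 : M (C2 d) = 0 := by rw [← hMe, h1]
    exact C2_ne d hd ((hM _ cop2).mp h2)
  · intro s hs
    rw [marg_pi d _ keyU s hs, marg_pi d _ keyC2 s hs]
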